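/- In the torus map {4,4}_{(8,0)}, the monodromy η = r₂r₁r₀r₁r₂r₁r₂r₁ is an involution and maps the 8 flags of any facet (square face) to 8 pairwise distinct facets. -/
import Mathlib


/-- The flags of the torus map `{4,4}_{(8,0)}`: a flag consists of a square of
the `8 × 8` toroidal chessboard (an element of `(ℤ/8)²`) together with one of
the 8 flags of that square, encoded by the side `s ∈ ℤ/4` of the square and an
endpoint `t ∈ ℤ/2` of that side (the vertex of the flag is corner `s + t`). -/
abbrev F44 := (ZMod 8 × ZMod 8) × (ZMod 4 × ZMod 2)

/-- The connection `r₀`: change the vertex, keeping the edge and the square. -/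
def r0 : F44 → F44 := fun ⟨p, s, t⟩ => (p, (s, t + 1))

/-- The connection `r₁`: change the edge, keeping the vertex and the square. -/
def r1 : F44 → F44 := fun ⟨p, s, t⟩ => (p, (if t = 0 then s - 1 else s + 1, t + 1))

/-- The displacement to the neighboring square across side `s`. -/
def wvec : ZMod 4 → ZMod 8 × ZMod 8 := fun s =>
  if s = 0 then (0, -1) else if s = 1 then (1, 0) else if s = 2 then (0, 1) else (-1, 0)

/-- The connection `r₂`: change the square, keeping the vertex and the edge. -/
def r2 : F44 → F44 := fun ⟨p, s, t⟩ => (p + wvec s, (s + 2, t + 1))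

/-- The monodromy `η = r₂r₁r₀r₁r₂r₁r₂r₁`, acting on flags on the right
(`r₂` is applied first). -/
def eta : F44 → F44 := fun Φ => r1 (r2 (r1 (r2 (r1 (r0 (r1 (r2 Φ)))))))

/-- A map on flags is a *shift map* if it acts on the square coordinate by a
translation determined only by the flag type. -/
def Shift (f : F44 → F44) : Prop :=
  ∀ p x, f (p, x) = (p + (f (0, x)).1, (f (0, x)).2)

lemma shift_comp {f g : F44 → F44} (hf : Shift f) (hg : Shift g) :
    Shift (fun Φ => g (f Φ)) := by
  intro p x
  show g (f (p, x)) = (p + (g (f (0, x))).1, (g (f (0, x))).2)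
  rcases h : f (0, x) with ⟨a, b⟩
  rw [hf p x, h, hg _ _, hg a b]
  simp [add_assoc]

lemma shift_r0 : Shift r0 := by rintro p ⟨s, t⟩; simp [r0]
lemma shift_r1 : Shift r1 := by rintro p ⟨s, t⟩; simp [r1]
lemma shift_r2 : Shift r2 := by rintro p ⟨s, t⟩; simp [r2]

lemma shift_eta : Shift eta := by
  have h := shift_comp (shift_comp (shift_comp (shift_comp (shift_comp (shift_comp
    (shift_comp shift_r2 shift_r1) shift_r0) shift_r1) shift_r2) shift_r1) shift_r2) shift_r1
  intro p x
  exact h p x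

/-- In the torus map `{4,4}_{(8,0)}`, the monodromy `η = r₂r₁r₀r₁r₂r₁r₂r₁` is
an involution, and it maps the 8 flags of any facet (square face, i.e. flags
sharing the first coordinate) to 8 pairwise distinct facets. -/
theorem stmt18 :
    (∀ Φ : F44, eta (eta Φ) = Φ) ∧
    (∀ Φ Ψ : F44, Φ.1 = Ψ.1 → Φ ≠ Ψ → (eta Φ).1 ≠ (eta Ψ).1) := by
  constructor
  · rintro ⟨p, x⟩
    rw [shift_eta p x, shift_eta _ _]
    have h1 : ∀ x : ZMod 4 × ZMod 2,
        (eta (0, x)).1 + (eta (0, (eta (0, x)).2)).1 = 0 := by decide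
    have h2 : ∀ x : ZMod 4 × ZMod 2, (eta (0, (eta (0, x)).2)).2 = x := by decide
    rw [h2, add_assoc, h1, add_zero]
  · rintro ⟨p, x⟩ ⟨q, y⟩ hpq hne
    simp only at hpq
    subst hpq
    have hxy : x ≠ y := fun h => hne (by rw [h])
    rw [shift_eta p x, shift_eta p y]
    simp only [ne_eq, add_right_inj]
    have hv : ∀ x y : ZMod 4 × ZMod 2, x ≠ y → (eta (0, x)).1 ≠ (eta (0, y)).1 := by decide
    exact hv x y hxy
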